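/- Let p_0 < 1. For each n, let (C_{n,i}, i ≥ 1) be independent events with P(C_{n,i}) ≤ p_0 for all i, and suppose S_n := Σ_i 1_{C_{n,i}} converges in distribution (in the compactified nonnegative integers {0,1,2,…,∞}) to a random variable M*. Then either P(M* = 0) > 0 or P(M* = ∞) = 1. -/

import Mathlib

open MeasureTheory ProbabilityTheory Filter
open scoped ENNReal Topology

private lemma aux_real_key {p₁ x : ℝ} {kk : ℕ} (hx0 : 0 ≤ x) (hx : x ≤ p₁) (hp : p₁ < 1)
    (hkk : 2 / (1 - p₁) ≤ (kk : ℝ)) : (1 - x / 2) ^ kk ≤ 1 - x := by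
  have hx1 : x < 1 := lt_of_le_of_lt hx hp
  have hb : (0:ℝ) < 1 + x / 2 := by linarith
  have h0 : (0:ℝ) ≤ 1 - x / 2 := by linarith
  have h1 : 1 - x / 2 ≤ 1 / (1 + x / 2) := by
    rw [le_div_iff₀ hb]; nlinarith
  have h2 : (1 - x / 2) ^ kk ≤ (1 / (1 + x / 2)) ^ kk := pow_le_pow_left₀ h0 h1 kk
  have h3 : (1 / (1 + x / 2) : ℝ) ^ kk = 1 / ((1 + x / 2) ^ kk) := by
    rw [div_pow, one_pow]
  have hbpos : (0:ℝ) < 1 + (kk : ℝ) * (x / 2) := by positivity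
  have bern : 1 + (kk : ℝ) * (x / 2) ≤ (1 + x / 2) ^ kk := one_add_mul_le_pow (by linarith) kk
  have h4 : 1 / ((1 + x / 2) ^ kk) ≤ 1 / (1 + (kk : ℝ) * (x / 2)) :=
    one_div_le_one_div_of_le hbpos bern
  have hk2 : 2 ≤ (kk : ℝ) * (1 - x) := by
    have h6 : 2 / (1 - p₁) * (1 - x) ≤ (kk : ℝ) * (1 - x) :=
      mul_le_mul_of_nonneg_right hkk (by linarith)
    have h7 : (2:ℝ) ≤ 2 / (1 - p₁) * (1 - x) := by
      rw [div_mul_eq_mul_div, le_div_iff₀ (by linarith)]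
      nlinarith
    linarith
  have h5 : 1 / (1 + (kk : ℝ) * (x / 2)) ≤ 1 - x := by
    rw [div_le_iff₀ hbpos]
    nlinarith [mul_nonneg hx0 (sub_nonneg.2 hk2)]
  calc (1 - x / 2) ^ kk ≤ (1 / (1 + x / 2)) ^ kk := h2
    _ = 1 / ((1 + x / 2) ^ kk) := h3
    _ ≤ 1 / (1 + (kk : ℝ) * (x / 2)) := h4
    _ ≤ 1 - x := h5

private lemma aux_ennreal_key {p₁ : ℝ} {q : ℝ≥0∞} {kk : ℕ} (hp0 : 0 ≤ p₁) (hp : p₁ < 1)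
    (hq : q ≤ ENNReal.ofReal p₁) (hkk : 2 / (1 - p₁) ≤ (kk : ℝ)) :
    (1 - q / 2) ^ kk ≤ 1 - q := by
  have hqt : q ≠ ∞ := (hq.trans_lt ENNReal.ofReal_lt_top).ne
  have hx0 : 0 ≤ q.toReal := ENNReal.toReal_nonneg
  have hxp : q.toReal ≤ p₁ := ENNReal.toReal_le_of_le_ofReal hp0 hq
  have hx1 : q.toReal < 1 := lt_of_le_of_lt hxp hp
  have hq' : q = ENNReal.ofReal q.toReal := (ENNReal.ofReal_toReal hqt).symm
  have e1 : 1 - q = ENNReal.ofReal (1 - q.toReal) := by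
    rw [ENNReal.ofReal_sub 1 hx0, ENNReal.ofReal_one, ← hq']
  have e2 : 1 - q / 2 = ENNReal.ofReal (1 - q.toReal / 2) := by
    rw [ENNReal.ofReal_sub 1 (by linarith), ENNReal.ofReal_one,
      ENNReal.ofReal_div_of_pos (by norm_num), ← hq']
    norm_num
  rw [e1, e2, ← ENNReal.ofReal_pow (by linarith : (0:ℝ) ≤ 1 - q.toReal / 2)]
  exact ENNReal.ofReal_le_ofReal (aux_real_key hx0 hxp hp hkk)

/-- **Lemma 50 of Aldous–Bandyopadhyay.** Let `p₀ < 1`. For each `n`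
let `(C_{n,i})_{i≥1}` be independent events with `P(C_{n,i}) ≤ p₀`, and suppose
`S_n = ∑_i 1_{C_{n,i}}` converges in distribution in the compactified nonnegative
integers to a random variable `M*` (pointwise convergence of the probabilities of
`{S_n = k}` for finite `k` and of the tails `{S_n ≥ k}`). Then either
`P(M* = 0) > 0` or `P(M* = ∞) = 1`. -/
theorem zero_or_infinity_dichotomy
    {Ω : Type*} [MeasurableSpace Ω] (P : Measure Ω) [IsProbabilityMeasure P]
    (p₀ : ℝ) (hp₀ : p₀ < 1)
    (C : ℕ → ℕ → Set Ω)
    (hmeas : ∀ n i, MeasurableSet (C n i))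
    (hindep : ∀ n, iIndepSet (C n) P)
    (hbound : ∀ n i, P (C n i) ≤ ENNReal.ofReal p₀)
    (Mstar : Ω → ℝ≥0∞) (hMmeas : Measurable Mstar)
    (hconv : ∀ k : ℕ,
      Filter.Tendsto (fun n => P {ω | (∑' i, (C n i).indicator (fun _ => (1:ℝ≥0∞)) ω) = k})
        Filter.atTop (nhds (P {ω | Mstar ω = k})))
    (hconvTail : ∀ k : ℕ,
      Filter.Tendsto (fun n => P {ω | (k:ℝ≥0∞) ≤ ∑' i, (C n i).indicator (fun _ => (1:ℝ≥0∞)) ω})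
        Filter.atTop (nhds (P {ω | (k:ℝ≥0∞) ≤ Mstar ω}))) :
    0 < P {ω | Mstar ω = 0} ∨ P {ω | Mstar ω = ∞} = 1 := by
  classical
  rcases eq_or_ne (P {ω | Mstar ω = 0}) 0 with h0 | h0
  · right
    set p₁ : ℝ := max p₀ 0 with hp₁def
    have hp₁ : p₁ < 1 := max_lt hp₀ one_pos
    have hp₁0 : 0 ≤ p₁ := le_max_right _ _
    set kk : ℕ := ⌈2 / (1 - p₁)⌉₊ with hkkdef
    have hkk : 2 / (1 - p₁) ≤ (kk : ℝ) := Nat.le_ceil _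
    have hkkpos : kk ≠ 0 := by
      have h2 : (0:ℝ) < 2 / (1 - p₁) := by
        apply div_pos two_pos; linarith
      intro h
      rw [h] at hkk
      norm_num at hkk
      linarith
    have hbound' : ∀ n i, P (C n i) ≤ ENNReal.ofReal p₁ := fun n i =>
      (hbound n i).trans (ENNReal.ofReal_le_ofReal (le_max_left _ _))
    -- product formula for independent events
    have prodfml : ∀ n (N : ℕ) (f : ℕ → Set Ω), (∀ i, f i = C n i ∨ f i = (C n i)ᶜ) →
        P (⋂ i ∈ Finset.range N, f i) = ∏ i ∈ Finset.range N, P (f i) := by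
      intro n N f hf
      refine (iIndepSet_iff _ _).1 (hindep n) (Finset.range N) fun i _ => ?_
      rcases hf i with h | h <;> rw [h]
      · exact MeasurableSpace.measurableSet_generateFrom rfl
      · exact MeasurableSet.compl (MeasurableSpace.measurableSet_generateFrom rfl)
    have half : ∀ q : ℝ≥0∞, q ≤ 1 → q / 2 + (1 - q) = 1 - q / 2 := by
      intro q hq1
      have hqt : q ≠ ∞ := (hq1.trans_lt ENNReal.one_lt_top).ne
      have h2 : q / 2 ≠ ∞ := (ENNReal.div_lt_top hqt two_ne_zero).ne
      refine (ENNReal.sub_eq_of_eq_add h2 ?_).symm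
      calc (1:ℝ≥0∞) = q + (1 - q) := (add_tsub_cancel_of_le hq1).symm
        _ = (q / 2 + q / 2) + (1 - q) := by rw [ENNReal.add_halves]
        _ = q / 2 + (1 - q) + q / 2 := by ring
    -- master inequality
    have key : ∀ (k n : ℕ),
        ((2:ℝ≥0∞)⁻¹ ^ k *
            P {ω | (∑' i, (C n i).indicator (fun _ => (1:ℝ≥0∞)) ω) < (k:ℝ≥0∞)}) ^ kk
          ≤ P {ω | (∑' i, (C n i).indicator (fun _ => (1:ℝ≥0∞)) ω) = ((0:ℕ):ℝ≥0∞)} := by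
      intro k n
      have step1 : ∀ N : ℕ,
          P {ω | (∑' i, (C n i).indicator (fun _ => (1:ℝ≥0∞)) ω) < (k:ℝ≥0∞)}
            ≤ 2 ^ k * ∏ i ∈ Finset.range N, (1 - P (C n i) / 2) := by
        intro N
        set 𝒜 := (Finset.range N).powerset.filter (fun A => A.card < k) with h𝒜
        have hsub : {ω | (∑' i, (C n i).indicator (fun _ => (1:ℝ≥0∞)) ω) < (k:ℝ≥0∞)} ⊆
            ⋃ A ∈ 𝒜, ⋂ i ∈ Finset.range N, (if i ∈ A then C n i else (C n i)ᶜ) := by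
          intro ω hω
          set A := (Finset.range N).filter (fun i => ω ∈ C n i) with hA
          have hcard : (∑ i ∈ Finset.range N, (C n i).indicator (fun _ => (1:ℝ≥0∞)) ω)
              = (A.card : ℝ≥0∞) := by
            rw [hA, Finset.card_filter, Nat.cast_sum]
            refine Finset.sum_congr rfl fun i _ => ?_
            by_cases h : ω ∈ C n i <;> simp [Set.indicator_apply, h]
          have hle : (A.card : ℝ≥0∞) < (k : ℝ≥0∞) := by
            rw [← hcard]
            exact lt_of_le_of_lt (ENNReal.sum_le_tsum _) hω
          have hcardk : A.card < k := by exact_mod_cast hle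
          refine Set.mem_iUnion₂.2 ⟨A, ?_, ?_⟩
          · exact Finset.mem_filter.2 ⟨Finset.mem_powerset.2 (Finset.filter_subset _ _), hcardk⟩
          · simp only [Set.mem_iInter]
            intro i hi
            by_cases hiA : i ∈ A
            · rw [if_pos hiA]; exact (Finset.mem_filter.1 hiA).2
            · rw [if_neg hiA]
              intro hmem
              exact hiA (Finset.mem_filter.2 ⟨hi, hmem⟩)
        calc P {ω | (∑' i, (C n i).indicator (fun _ => (1:ℝ≥0∞)) ω) < (k:ℝ≥0∞)}
            ≤ P (⋃ A ∈ 𝒜, ⋂ i ∈ Finset.range N, (if i ∈ A then C n i else (C n i)ᶜ)) :=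
              measure_mono hsub
          _ ≤ ∑ A ∈ 𝒜, P (⋂ i ∈ Finset.range N, (if i ∈ A then C n i else (C n i)ᶜ)) :=
              measure_biUnion_finset_le _ _
          _ ≤ ∑ A ∈ 𝒜, 2 ^ k * ((∏ i ∈ A, P (C n i) / 2) *
                ∏ i ∈ Finset.range N \ A, (1 - P (C n i))) := by
              refine Finset.sum_le_sum fun A hA => ?_
              rw [h𝒜, Finset.mem_filter, Finset.mem_powerset] at hA
              obtain ⟨hAsub, hAcard⟩ := hA
              rw [prodfml n N _ (fun i => by
                by_cases h : i ∈ A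
                · left; rw [if_pos h]
                · right; rw [if_neg h])]
              have hre : ∀ i ∈ Finset.range N, P (if i ∈ A then C n i else (C n i)ᶜ)
                  = if i ∈ A then P (C n i) else (1 - P (C n i)) := by
                intro i _
                by_cases h : i ∈ A <;> simp [h, prob_compl_eq_one_sub (hmeas n i)]
              rw [Finset.prod_congr rfl hre, Finset.prod_ite, Finset.filter_mem_eq_inter,
                Finset.inter_eq_right.2 hAsub, ← Finset.sdiff_eq_filter]
              have hA2 : ∏ i ∈ A, P (C n i) ≤ 2 ^ k * ∏ i ∈ A, (P (C n i) / 2) := by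
                have e : ∏ i ∈ A, P (C n i) = 2 ^ A.card * ∏ i ∈ A, (P (C n i) / 2) := by
                  rw [← Finset.prod_const, ← Finset.prod_mul_distrib]
                  exact Finset.prod_congr rfl fun i _ =>
                    (ENNReal.mul_div_cancel two_ne_zero ENNReal.ofNat_ne_top).symm
                rw [e]
                exact mul_le_mul_left (pow_le_pow_right₀ one_le_two hAcard.le) _
              calc (∏ i ∈ A, P (C n i)) * ∏ i ∈ Finset.range N \ A, (1 - P (C n i))
                  ≤ (2 ^ k * ∏ i ∈ A, (P (C n i) / 2)) *
                      ∏ i ∈ Finset.range N \ A, (1 - P (C n i)) := mul_le_mul_left hA2 _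
                _ = 2 ^ k * ((∏ i ∈ A, P (C n i) / 2) *
                      ∏ i ∈ Finset.range N \ A, (1 - P (C n i))) := by rw [mul_assoc]
          _ = 2 ^ k * ∑ A ∈ 𝒜, (∏ i ∈ A, P (C n i) / 2) *
                ∏ i ∈ Finset.range N \ A, (1 - P (C n i)) := by rw [Finset.mul_sum]
          _ ≤ 2 ^ k * ∑ A ∈ (Finset.range N).powerset, (∏ i ∈ A, P (C n i) / 2) *
                ∏ i ∈ Finset.range N \ A, (1 - P (C n i)) :=
              mul_le_mul_right (Finset.sum_le_sum_of_subset (Finset.filter_subset _ _)) _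
          _ = 2 ^ k * ∏ i ∈ Finset.range N, (P (C n i) / 2 + (1 - P (C n i))) := by
              rw [Finset.prod_add]
          _ = 2 ^ k * ∏ i ∈ Finset.range N, (1 - P (C n i) / 2) := by
              congr 1
              exact Finset.prod_congr rfl fun i _ => half _ prob_le_one
      have step2 : ∀ N : ℕ, (∏ i ∈ Finset.range N, (1 - P (C n i) / 2)) ^ kk
          ≤ P (⋂ i ∈ Finset.range N, (C n i)ᶜ) := by
        intro N
        rw [prodfml n N _ (fun i => Or.inr rfl), ← Finset.prod_pow]
        refine Finset.prod_le_prod' fun i _ => ?_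
        rw [prob_compl_eq_one_sub (hmeas n i)]
        exact aux_ennreal_key hp₁0 hp₁ (hbound' n i) hkk
      have step3 : Tendsto (fun N => P (⋂ i ∈ Finset.range N, (C n i)ᶜ)) atTop
          (𝓝 (P {ω | (∑' i, (C n i).indicator (fun _ => (1:ℝ≥0∞)) ω) = ((0:ℕ):ℝ≥0∞)})) := by
        have hset : {ω | (∑' i, (C n i).indicator (fun _ => (1:ℝ≥0∞)) ω) = ((0:ℕ):ℝ≥0∞)}
            = ⋂ N : ℕ, ⋂ i ∈ Finset.range N, (C n i)ᶜ := by
          ext ω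
          simp only [Set.mem_setOf_eq, Nat.cast_zero, ENNReal.tsum_eq_zero, Set.mem_iInter,
            Set.mem_compl_iff, Set.indicator_apply_eq_zero, Finset.mem_range]
          constructor
          · intro h N i _
            exact fun hmem => absurd (h i hmem) one_ne_zero
          · intro h i hmem
            exact absurd hmem (h (i + 1) i (Nat.lt_succ_self i))
        rw [hset]
        refine tendsto_measure_iInter_atTop
          (fun N => (MeasurableSet.biInter (Finset.range N).countable_toSet
            fun i _ => (hmeas n i).compl).nullMeasurableSet) ?_ ⟨0, measure_ne_top P _⟩
        intro a b hab ω hω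
        simp only [Set.mem_iInter, Finset.mem_range] at hω ⊢
        intro i hi
        exact hω i (lt_of_lt_of_le hi hab)
      refine ge_of_tendsto' step3 fun N => ?_
      refine le_trans ?_ (step2 N)
      have h2 : (2:ℝ≥0∞)⁻¹ ^ k *
          P {ω | (∑' i, (C n i).indicator (fun _ => (1:ℝ≥0∞)) ω) < (k:ℝ≥0∞)}
          ≤ (2:ℝ≥0∞)⁻¹ ^ k * (2 ^ k * ∏ i ∈ Finset.range N, (1 - P (C n i) / 2)) :=
        mul_le_mul_right (step1 N) _
      rw [← mul_assoc, ← mul_pow, ENNReal.inv_mul_cancel two_ne_zero ENNReal.ofNat_ne_top,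
        one_pow, one_mul] at h2
      exact pow_le_pow_left' h2 kk
    -- convergence of P(S_n = 0) to 0
    have hz : Tendsto
        (fun n => P {ω | (∑' i, (C n i).indicator (fun _ => (1:ℝ≥0∞)) ω) = ((0:ℕ):ℝ≥0∞)})
        atTop (𝓝 0) := by
      have h := hconv 0
      have h0' : P {ω | Mstar ω = ((0:ℕ):ℝ≥0∞)} = 0 := by rw [Nat.cast_zero]; exact h0
      rwa [h0'] at h
    -- hence P(S_n < k) → 0 for every k
    have hlt : ∀ k : ℕ, Tendsto
        (fun n => P {ω | (∑' i, (C n i).indicator (fun _ => (1:ℝ≥0∞)) ω) < (k:ℝ≥0∞)})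
        atTop (𝓝 0) := by
      intro k
      rw [ENNReal.tendsto_nhds_zero]
      intro ε hε
      have hhalfpow : ((2:ℝ≥0∞)⁻¹ ^ k) ≠ 0 :=
        pow_ne_zero _ (ENNReal.inv_ne_zero.2 ENNReal.ofNat_ne_top)
      have hε' : 0 < ((2:ℝ≥0∞)⁻¹ ^ k * ε) ^ kk := by
        refine ENNReal.pow_pos (ENNReal.mul_pos hhalfpow hε.ne') _
      filter_upwards [ENNReal.tendsto_nhds_zero.1 hz _ hε'] with n hn
      have h1 : ((2:ℝ≥0∞)⁻¹ ^ k *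
          P {ω | (∑' i, (C n i).indicator (fun _ => (1:ℝ≥0∞)) ω) < (k:ℝ≥0∞)}) ^ kk
          ≤ ((2:ℝ≥0∞)⁻¹ ^ k * ε) ^ kk := (key k n).trans hn
      have h2 : (2:ℝ≥0∞)⁻¹ ^ k *
          P {ω | (∑' i, (C n i).indicator (fun _ => (1:ℝ≥0∞)) ω) < (k:ℝ≥0∞)}
          ≤ (2:ℝ≥0∞)⁻¹ ^ k * ε := by
        by_contra hcon
        push_neg at hcon
        exact absurd h1 (not_le.2 (ENNReal.pow_lt_pow_left hkkpos hcon))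
      exact (ENNReal.mul_le_mul_iff_right hhalfpow
        (ENNReal.pow_ne_top (ENNReal.inv_ne_top.2 two_ne_zero))).1 h2
    -- tails of M* are full
    have htail : ∀ k : ℕ, P {ω | (k:ℝ≥0∞) ≤ Mstar ω} = 1 := by
      intro k
      refine le_antisymm prob_le_one ?_
      have hone : ∀ n, (1:ℝ≥0∞) ≤
          P {ω | (k:ℝ≥0∞) ≤ ∑' i, (C n i).indicator (fun _ => (1:ℝ≥0∞)) ω} +
          P {ω | (∑' i, (C n i).indicator (fun _ => (1:ℝ≥0∞)) ω) < (k:ℝ≥0∞)} := by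
        intro n
        have huniv : (Set.univ : Set Ω) ⊆
            {ω | (k:ℝ≥0∞) ≤ ∑' i, (C n i).indicator (fun _ => (1:ℝ≥0∞)) ω} ∪
            {ω | (∑' i, (C n i).indicator (fun _ => (1:ℝ≥0∞)) ω) < (k:ℝ≥0∞)} := by
          intro ω _
          exact (le_or_gt (k:ℝ≥0∞) _).imp id id
        calc (1:ℝ≥0∞) = P Set.univ := measure_univ.symm
          _ ≤ P (_ ∪ _) := measure_mono huniv
          _ ≤ _ + _ := measure_union_le _ _
      have hlim : Tendsto (fun n =>
          P {ω | (k:ℝ≥0∞) ≤ ∑' i, (C n i).indicator (fun _ => (1:ℝ≥0∞)) ω} +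
          P {ω | (∑' i, (C n i).indicator (fun _ => (1:ℝ≥0∞)) ω) < (k:ℝ≥0∞)}) atTop
          (𝓝 (P {ω | (k:ℝ≥0∞) ≤ Mstar ω} + 0)) := (hconvTail k).add (hlt k)
      have := le_of_tendsto_of_tendsto' tendsto_const_nhds hlim hone
      rwa [add_zero] at this
    -- conclude
    have hset : {ω | Mstar ω = ∞} = ⋂ k : ℕ, {ω | (k:ℝ≥0∞) ≤ Mstar ω} := by
      ext ω
      simp only [Set.mem_setOf_eq, Set.mem_iInter]
      constructor
      · intro h k; rw [h]; exact le_top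
      · intro h
        by_contra hne
        obtain ⟨k, hk⟩ := ENNReal.exists_nat_gt hne
        exact absurd (h k) (not_le.2 hk)
    have hm : ∀ k : ℕ, MeasurableSet {ω | (k:ℝ≥0∞) ≤ Mstar ω} := fun k =>
      hMmeas measurableSet_Ici
    rw [hset, ← prob_compl_eq_zero_iff (MeasurableSet.iInter hm), Set.compl_iInter]
    refine measure_iUnion_null fun k => ?_
    rw [prob_compl_eq_one_sub (hm k), htail k, tsub_self]
  · exact Or.inl (pos_iff_ne_zero.2 h0)
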